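/- arXiv:2208.01519 — 4 statements merged into one kernel-verified Lean document; each statement's English description precedes it below -/
import Mathlib

section
/- For n₃ ≥ n₂ ≥ n₁ ≥ 3, every resolving set of the Hamming graph HG(n₁,n₂,n₃;3) has at least 2n₃ − 1 elements; equivalently, the metric dimension of HG(n₁,n₂,n₃;3) is at least 2n₃ − 1. -/
/-- The generalized Hamming graph `HG(n₁,n₂,n₃;3)`: vertices are triples
(modeled with `Fin nᵢ`), adjacent iff they differ in all three coordinates. -/
def HG (n₁ n₂ n₃ : ℕ) : SimpleGraph (Fin n₁ × Fin n₂ × Fin n₃) where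
  Adj x y := x.1 ≠ y.1 ∧ x.2.1 ≠ y.2.1 ∧ x.2.2 ≠ y.2.2
  symm := ⟨fun x y h => ⟨h.1.symm, h.2.1.symm, h.2.2.symm⟩⟩
  loopless := ⟨fun x h => h.1 rfl⟩

/-- `W` is a resolving set for `HG(n₁,n₂,n₃;3)`: every pair of distinct vertices not
in `W` is resolved by some landmark in `W`. -/
def IsResolving {n₁ n₂ n₃ : ℕ} (W : Set (Fin n₁ × Fin n₂ × Fin n₃)) : Prop :=
  ∀ x y : Fin n₁ × Fin n₂ × Fin n₃, x ∉ W → y ∉ W → x ≠ y →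
    ∃ w ∈ W, (HG n₁ n₂ n₃).dist x w ≠ (HG n₁ n₂ n₃).dist y w

/-- The metric dimension of `HG(n₁,n₂,n₃;3)`: minimum size of a resolving set. -/
noncomputable def metricDim (n₁ n₂ n₃ : ℕ) : ℕ :=
  sInf {k | ∃ W : Set (Fin n₁ × Fin n₂ × Fin n₃), IsResolving W ∧ W.ncard = k}

/-- The block `W_{1,a}`: landmarks whose first coordinate is `a`. -/
def block1 {n₁ n₂ n₃ : ℕ} (W : Set (Fin n₁ × Fin n₂ × Fin n₃)) (a : Fin n₁) :
    Set (Fin n₁ × Fin n₂ × Fin n₃) := {w ∈ W | w.1 = a}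

/-- The block `W_{2,a}`: landmarks whose second coordinate is `a`. -/
def block2 {n₁ n₂ n₃ : ℕ} (W : Set (Fin n₁ × Fin n₂ × Fin n₃)) (a : Fin n₂) :
    Set (Fin n₁ × Fin n₂ × Fin n₃) := {w ∈ W | w.2.1 = a}

/-- The block `W_{3,a}`: landmarks whose third coordinate is `a`. -/
def block3 {n₁ n₂ n₃ : ℕ} (W : Set (Fin n₁ × Fin n₂ × Fin n₃)) (a : Fin n₃) :
    Set (Fin n₁ × Fin n₂ × Fin n₃) := {w ∈ W | w.2.2 = a}

set_option linter.unusedVariables false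

lemma fin_exists_ne_ne {n : ℕ} (h : 3 ≤ n) (a b : Fin n) : ∃ c : Fin n, c ≠ a ∧ c ≠ b := by
  by_contra hc
  push_neg at hc
  have hsub : (Finset.univ : Finset (Fin n)) ⊆ {a, b} := by
    intro c _
    by_cases h1 : c = a
    · simp [h1]
    · simp [hc c h1]
  have h2 := Finset.card_le_card hsub
  have h3 := Finset.card_insert_le a ({b} : Finset (Fin n))
  simp at h2 h3
  omega

/-- `x` shares a coordinate with `w`. -/
def Share {n₁ n₂ n₃ : ℕ} (x w : Fin n₁ × Fin n₂ × Fin n₃) : Prop :=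
  x.1 = w.1 ∨ x.2.1 = w.2.1 ∨ x.2.2 = w.2.2

instance {n₁ n₂ n₃ : ℕ} (x w : Fin n₁ × Fin n₂ × Fin n₃) : Decidable (Share x w) := by
  unfold Share; infer_instance


lemma hg_dist (n₁ n₂ n₃ : ℕ) (h₁ : 3 ≤ n₁) (h₂ : 3 ≤ n₂) (h₃ : 3 ≤ n₃)
    (x w : Fin n₁ × Fin n₂ × Fin n₃) (hxw : x ≠ w) :
    (HG n₁ n₂ n₃).dist x w = if Share x w then 2 else 1 := by
  by_cases hs : Share x w
  · simp only [hs, if_true]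
    -- not adjacent
    have hnadj : ¬ (HG n₁ n₂ n₃).Adj x w := by
      rintro ⟨ha, hb, hc⟩
      rcases hs with h | h | h <;> [exact ha h; exact hb h; exact hc h]
    -- midpoint
    obtain ⟨c₁, hc₁⟩ := fin_exists_ne_ne h₁ x.1 w.1
    obtain ⟨c₂, hc₂⟩ := fin_exists_ne_ne h₂ x.2.1 w.2.1
    obtain ⟨c₃, hc₃⟩ := fin_exists_ne_ne h₃ x.2.2 w.2.2
    set z : Fin n₁ × Fin n₂ × Fin n₃ := (c₁, c₂, c₃) with hz
    have hadj1 : (HG n₁ n₂ n₃).Adj x z := ⟨fun h => hc₁.1 h.symm, fun h => hc₂.1 h.symm, fun h => hc₃.1 h.symm⟩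
    have hadj2 : (HG n₁ n₂ n₃).Adj z w := ⟨hc₁.2, hc₂.2, hc₃.2⟩
    have hle : (HG n₁ n₂ n₃).dist x w ≤ 2 := by
      have := SimpleGraph.dist_le ((hadj1.toWalk).append (hadj2.toWalk))
      simpa using this
    have hne1 : (HG n₁ n₂ n₃).dist x w ≠ 1 :=
      fun h => hnadj (SimpleGraph.dist_eq_one_iff_adj.mp h)
    have hne0 : (HG n₁ n₂ n₃).dist x w ≠ 0 := by
      intro h
      rcases SimpleGraph.dist_eq_zero_iff_eq_or_not_reachable.mp h with h' | h'
      · exact hxw h'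
      · exact h' ⟨(hadj1.toWalk).append (hadj2.toWalk)⟩
    omega
  · simp only [hs, if_false]
    rw [SimpleGraph.dist_eq_one_iff_adj]
    unfold Share at hs
    push_neg at hs
    exact ⟨hs.1, hs.2.1, hs.2.2⟩

lemma key_lemma (n₁ n₂ n₃ : ℕ) (h₁ : 3 ≤ n₁) (h₂ : 3 ≤ n₂) (h₃ : 3 ≤ n₃)
    (W : Set (Fin n₁ × Fin n₂ × Fin n₃)) (hW : IsResolving W)
    (a a' : Fin n₃) (haa : a ≠ a') (u v : Fin n₁ × Fin n₂ × Fin n₃)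
    (hcov : ∀ w ∈ W, (w.2.2 = a ∨ w.2.2 = a') → w = u ∨ w = v) : False := by
  -- choose (p, q) such that the crosses of u and v cover (p,q) but (p,q) avoids
  -- the first-two-coordinate pairs of u and v
  obtain ⟨p, q, hu, hv, hxu, hxv⟩ :
      ∃ (p : Fin n₁) (q : Fin n₂), (u.1 = p ∨ u.2.1 = q) ∧ (v.1 = p ∨ v.2.1 = q) ∧
        ¬(p = u.1 ∧ q = u.2.1) ∧ ¬(p = v.1 ∧ q = v.2.1) := by
    by_cases h12 : u.1 = v.1
    · obtain ⟨q, hq1, hq2⟩ := fin_exists_ne_ne h₂ u.2.1 v.2.1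
      exact ⟨u.1, q, Or.inl rfl, Or.inl h12.symm,
        fun h => hq1 h.2, fun h => hq2 h.2⟩
    · by_cases h22 : u.2.1 = v.2.1
      · obtain ⟨p, hp1, hp2⟩ := fin_exists_ne_ne h₁ u.1 v.1
        exact ⟨p, u.2.1, Or.inr rfl, Or.inr h22.symm,
          fun h => hp1 h.1, fun h => hp2 h.1⟩
      · exact ⟨u.1, v.2.1, Or.inl rfl, Or.inr rfl,
          fun h => h22 h.2.symm, fun h => h12 h.1⟩
  set x : Fin n₁ × Fin n₂ × Fin n₃ := (p, q, a) with hxdef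
  set y : Fin n₁ × Fin n₂ × Fin n₃ := (p, q, a') with hydef
  have hxW : x ∉ W := by
    intro hx
    rcases hcov x hx (Or.inl rfl) with h | h
    · exact hxu ⟨congrArg Prod.fst h, congrArg (fun z => z.2.1) h⟩
    · exact hxv ⟨congrArg Prod.fst h, congrArg (fun z => z.2.1) h⟩
  have hyW : y ∉ W := by
    intro hy
    rcases hcov y hy (Or.inr rfl) with h | h
    · exact hxu ⟨congrArg Prod.fst h, congrArg (fun z => z.2.1) h⟩
    · exact hxv ⟨congrArg Prod.fst h, congrArg (fun z => z.2.1) h⟩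
  have hxy : x ≠ y := fun h => haa (congrArg (fun z => z.2.2) h)
  obtain ⟨w, hwW, hd⟩ := hW x y hxW hyW hxy
  have hwx : x ≠ w := fun h => hxW (h ▸ hwW)
  have hwy : y ≠ w := fun h => hyW (h ▸ hwW)
  rw [hg_dist n₁ n₂ n₃ h₁ h₂ h₃ x w hwx, hg_dist n₁ n₂ n₃ h₁ h₂ h₃ y w hwy] at hd
  -- w does not share first two coordinates with (p,q) and has third coord a or a'
  have hkey : (p ≠ w.1 ∧ q ≠ w.2.1) ∧ (w.2.2 = a ∨ w.2.2 = a') := by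
    by_cases hsx : Share x w <;> by_cases hsy : Share y w <;>
      simp only [hsx, hsy, if_true, if_false] at hd
    · exact absurd rfl hd
    · unfold Share at hsx hsy
      push_neg at hsy
      simp only [hxdef, hydef] at hsx hsy
      obtain ⟨hsy1, hsy2, hsy3⟩ := hsy
      rcases hsx with h | h | h
      · exact absurd h hsy1
      · exact absurd h hsy2
      · exact ⟨⟨hsy1, hsy2⟩, Or.inl h.symm⟩
    · unfold Share at hsx hsy
      push_neg at hsx
      simp only [hxdef, hydef] at hsx hsy
      obtain ⟨hsx1, hsx2, hsx3⟩ := hsx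
      rcases hsy with h | h | h
      · exact absurd h hsx1
      · exact absurd h hsx2
      · exact ⟨⟨hsx1, hsx2⟩, Or.inr h.symm⟩
    · exact absurd rfl hd
  obtain ⟨⟨hp, hq⟩, h3⟩ := hkey
  rcases hcov w hwW h3 with h | h
  · subst h
    rcases hu with h' | h'
    · exact hp h'.symm
    · exact hq h'.symm
  · subst h
    rcases hv with h' | h'
    · exact hp h'.symm
    · exact hq h'.symm

lemma subset_pair_of_card_le_two {α : Type*} [DecidableEq α] [Nonempty α]
    (s : Finset α) (hs : s.card ≤ 2) : ∃ u v : α, ∀ w ∈ s, w = u ∨ w = v := by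
  rcases s.eq_empty_or_nonempty with h | h
  · exact ⟨Classical.arbitrary α, Classical.arbitrary α, fun w hw => by simp [h] at hw⟩
  · obtain ⟨u, hu⟩ := h
    have h1 : (s.erase u).card ≤ 1 := by
      have := Finset.card_erase_of_mem hu
      omega
    obtain ⟨v, hv⟩ := Finset.card_le_one_iff_subset_singleton.mp h1
    refine ⟨u, v, fun w hw => ?_⟩
    by_cases hwu : w = u
    · exact Or.inl hwu
    · have : w ∈ s.erase u := Finset.mem_erase.mpr ⟨hwu, hw⟩
      exact Or.inr (Finset.mem_singleton.mp (hv this))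

lemma sum_ge_of_pairwise {n : ℕ} (hn : 3 ≤ n) (f : Fin n → ℕ)
    (hf : ∀ a b : Fin n, a ≠ b → 3 ≤ f a + f b) :
    2 * n - 1 ≤ ∑ a : Fin n, f a := by
  by_cases hex : ∃ a, f a ≤ 1
  · obtain ⟨a₀, ha₀⟩ := hex
    have hsplit : f a₀ + ∑ a ∈ Finset.univ.erase a₀, f a = ∑ a : Fin n, f a :=
      Finset.add_sum_erase _ f (Finset.mem_univ a₀)
    have hlb : ∀ a ∈ Finset.univ.erase a₀, 3 - f a₀ ≤ f a := by
      intro a ha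
      have hne : a ≠ a₀ := (Finset.mem_erase.mp ha).1
      have := hf a a₀ hne
      omega
    have hsum : (Finset.univ.erase a₀).card * (3 - f a₀) ≤
        ∑ a ∈ Finset.univ.erase a₀, f a := by
      calc (Finset.univ.erase a₀).card * (3 - f a₀)
          = ∑ _a ∈ Finset.univ.erase a₀, (3 - f a₀) := by
            rw [Finset.sum_const, smul_eq_mul]
        _ ≤ ∑ a ∈ Finset.univ.erase a₀, f a := Finset.sum_le_sum hlb
    have hcard : (Finset.univ.erase a₀).card = n - 1 := by
      rw [Finset.card_erase_of_mem (Finset.mem_univ a₀)]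
      simp
    rw [hcard] at hsum
    have : f a₀ = 0 ∨ f a₀ = 1 := by omega
    rcases this with h | h <;> rw [h] at hsum hsplit <;> omega
  · push_neg at hex
    have : ∀ a ∈ (Finset.univ : Finset (Fin n)), 2 ≤ f a := fun a _ => hex a
    have hsum : (Finset.univ : Finset (Fin n)).card * 2 ≤ ∑ a : Fin n, f a := by
      calc (Finset.univ : Finset (Fin n)).card * 2
          = ∑ _a : Fin n, 2 := by rw [Finset.sum_const, smul_eq_mul]
        _ ≤ _ := Finset.sum_le_sum this
    simp only [Finset.card_univ, Fintype.card_fin] at hsum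
    omega

set_option maxHeartbeats 1000000 in
lemma main_bound (n₁ n₂ n₃ : ℕ) (h₁ : 3 ≤ n₁) (h₂ : 3 ≤ n₂) (h₃ : 3 ≤ n₃)
    (W : Set (Fin n₁ × Fin n₂ × Fin n₃)) (hW : IsResolving W) :
    2 * n₃ - 1 ≤ W.ncard := by
  classical
  haveI : Nonempty (Fin n₁ × Fin n₂ × Fin n₃) :=
    ⟨(⟨0, by omega⟩, ⟨0, by omega⟩, ⟨0, by omega⟩)⟩
  have hFin : W.Finite := Set.toFinite W
  set F : Finset (Fin n₁ × Fin n₂ × Fin n₃) := hFin.toFinset with hF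
  have hcard : W.ncard = F.card := Set.ncard_eq_toFinset_card W hFin
  have hfib : F.card = ∑ a : Fin n₃, (F.filter fun w => w.2.2 = a).card :=
    Finset.card_eq_sum_card_fiberwise (fun x _ => Finset.mem_univ x.2.2)
  have hpair : ∀ a a' : Fin n₃, a ≠ a' →
      3 ≤ (F.filter fun w => w.2.2 = a).card + (F.filter fun w => w.2.2 = a').card := by
    intro a a' haa
    by_contra hle
    push_neg at hle
    have hcard2 : (F.filter fun w => w.2.2 = a ∨ w.2.2 = a').card ≤ 2 := by
      have := Finset.card_union_le (F.filter fun w => w.2.2 = a)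
        (F.filter fun w => w.2.2 = a')
      rw [← Finset.filter_or] at this
      omega
    obtain ⟨u, v, huv⟩ := subset_pair_of_card_le_two _ hcard2
    exact key_lemma n₁ n₂ n₃ h₁ h₂ h₃ W hW a a' haa u v
      (fun w hw h3 => huv w (Finset.mem_filter.mpr ⟨hFin.mem_toFinset.mpr hw, h3⟩))
  have hsum : 2 * n₃ - 1 ≤ ∑ a : Fin n₃, (F.filter fun w => w.2.2 = a).card :=
    sum_ge_of_pairwise h₃ (fun a => (F.filter fun w => w.2.2 = a).card) hpair
  omega

theorem stmt3 (n₁ n₂ n₃ : ℕ) (h₁ : 3 ≤ n₁) (h₁₂ : n₁ ≤ n₂) (h₂₃ : n₂ ≤ n₃) :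
    (∀ W : Set (Fin n₁ × Fin n₂ × Fin n₃), IsResolving W → 2 * n₃ - 1 ≤ W.ncard) ∧
    2 * n₃ - 1 ≤ metricDim n₁ n₂ n₃ := by
  have h₂ : 3 ≤ n₂ := le_trans h₁ h₁₂
  have h₃ : 3 ≤ n₃ := le_trans h₂ h₂₃
  constructor
  · exact fun W hW => main_bound n₁ n₂ n₃ h₁ h₂ h₃ W hW
  · apply le_csInf
    · exact ⟨(Set.univ : Set (Fin n₁ × Fin n₂ × Fin n₃)).ncard, Set.univ,
        fun x y hx _ _ => absurd (Set.mem_univ x) hx, rfl⟩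
    · rintro k ⟨W, hW, rfl⟩
      exact main_bound n₁ n₂ n₃ h₁ h₂ h₃ W hW
end

section
/- Let n ≥ 3. If W is a resolving set of HG(n,n,n;3) of size 2n − 1, then for each i ∈ {1,2,3} there is exactly one value a ∈ [n] with |W_{i,a}| = 1, and |W_{i,b}| = 2 for the remaining n − 1 values b ∈ [n]. (In the language of the landmark graph: exactly one loop and exactly n − 1 plain edges of each color.) -/
/-! ### Auxiliary development -/

section Aux

variable {n : ℕ}

/-- Abbreviation for the vertex type. -/
abbrev Vtx (n : ℕ) := Fin n × Fin n × Fin n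

/-- `x` shares a coordinate with `w`. -/
abbrev sh (x w : Vtx n) : Prop := x.1 = w.1 ∨ x.2.1 = w.2.1 ∨ x.2.2 = w.2.2

/-- Adjacency-level reformulation of the resolving property. -/
def Res (W : Set (Vtx n)) : Prop :=
  ∀ x y : Vtx n, x ∉ W → y ∉ W → x ≠ y → ∃ w ∈ W, ¬ (sh x w ↔ sh y w)

lemma exists_ne_ne (hn : 3 ≤ n) (a b : Fin n) : ∃ c : Fin n, c ≠ a ∧ c ≠ b := by
  by_contra h
  push_neg at h
  have hsub : (Finset.univ : Finset (Fin n)) ⊆ {a, b} := by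
    intro c _
    rcases eq_or_ne c a with rfl | hca
    · exact Finset.mem_insert_self _ _
    · simp [h c hca]
  have h1 := Finset.card_le_card hsub
  have h2 : ({a, b} : Finset (Fin n)).card ≤ 2 :=
    (Finset.card_insert_le _ _).trans (by simp)
  simp only [Finset.card_univ, Fintype.card_fin] at h1
  omega

lemma dist_formula (hn : 3 ≤ n) (x w : Vtx n) (hxw : x ≠ w) :
    (HG n n n).dist x w = if sh x w then 2 else 1 := by
  by_cases h : sh x w
  · obtain ⟨c1, hc1a, hc1b⟩ := exists_ne_ne hn x.1 w.1
    obtain ⟨c2, hc2a, hc2b⟩ := exists_ne_ne hn x.2.1 w.2.1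
    obtain ⟨c3, hc3a, hc3b⟩ := exists_ne_ne hn x.2.2 w.2.2
    have h1 : (HG n n n).Adj x (c1, c2, c3) := ⟨hc1a.symm, hc2a.symm, hc3a.symm⟩
    have h2 : (HG n n n).Adj (c1, c2, c3) w := ⟨hc1b, hc2b, hc3b⟩
    have hle : (HG n n n).dist x w ≤ 2 := by
      refine le_trans (SimpleGraph.dist_le
        (SimpleGraph.Walk.cons h1 (SimpleGraph.Walk.cons h2 SimpleGraph.Walk.nil))) ?_
      simp
    have hne0 : (HG n n n).dist x w ≠ 0 := by
      intro h0
      rcases SimpleGraph.dist_eq_zero_iff_eq_or_not_reachable.mp h0 with h' | h'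
      · exact hxw h'
      · exact h' ⟨SimpleGraph.Walk.cons h1 (SimpleGraph.Walk.cons h2 SimpleGraph.Walk.nil)⟩
    have hne1 : (HG n n n).dist x w ≠ 1 := by
      intro h1'
      obtain ⟨ha, hb, hc⟩ := SimpleGraph.dist_eq_one_iff_adj.mp h1'
      rcases h with h | h | h
      · exact ha h
      · exact hb h
      · exact hc h
    rw [if_pos h]
    omega
  · rw [if_neg h]
    simp only [sh, not_or] at h
    exact SimpleGraph.dist_eq_one_iff_adj.mpr ⟨h.1, h.2.1, h.2.2⟩

lemma isResolving_res (hn : 3 ≤ n) (W : Set (Vtx n)) (hW : IsResolving W) : Res W := by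
  intro x y hx hy hxy
  obtain ⟨w, hwW, hd⟩ := hW x y hx hy hxy
  refine ⟨w, hwW, fun hiff => hd ?_⟩
  have hxw : x ≠ w := fun h => hx (h ▸ hwW)
  have hyw : y ≠ w := fun h => hy (h ▸ hwW)
  rw [dist_formula hn x w hxw, dist_formula hn y w hyw]
  by_cases h : sh x w
  · rw [if_pos h, if_pos (hiff.mp h)]
  · rw [if_neg h, if_neg (fun h' => h (hiff.mpr h'))]

/-- Master unresolved-pair lemma: if the vertices `(a,q,r)` and `(a',q,r)` are not
landmarks and every landmark in the blocks `A_a`, `A_{a'}` meets row `q` or column `r`,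
then the pair is unresolved, contradicting `Res W`. -/
lemma master {W : Set (Vtx n)} (hR : Res W) {a a' : Fin n} (haa : a ≠ a') (q r : Fin n)
    (hx : ((a, q, r) : Vtx n) ∉ W) (hy : ((a', q, r) : Vtx n) ∉ W)
    (h1 : ∀ w ∈ W, w.1 = a → (w.2.1 = q ∨ w.2.2 = r))
    (h2 : ∀ w ∈ W, w.1 = a' → (w.2.1 = q ∨ w.2.2 = r)) : False := by
  obtain ⟨w, hwW, hw⟩ := hR (a, q, r) (a', q, r) hx hy
    (fun h => haa (congrArg Prod.fst h))
  apply hw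
  constructor
  · rintro (h | h | h)
    · rcases h1 w hwW h.symm with h' | h'
      · exact Or.inr (Or.inl h'.symm)
      · exact Or.inr (Or.inr h'.symm)
    · exact Or.inr (Or.inl h)
    · exact Or.inr (Or.inr h)
  · rintro (h | h | h)
    · rcases h2 w hwW h.symm with h' | h'
      · exact Or.inr (Or.inl h'.symm)
      · exact Or.inr (Or.inr h'.symm)
    · exact Or.inr (Or.inl h)
    · exact Or.inr (Or.inr h)

lemma mem_block1 {W : Set (Vtx n)} {a : Fin n} {x : Vtx n} :
    x ∈ block1 W a ↔ x ∈ W ∧ x.1 = a := Iff.rfl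

lemma sum_block1 (W : Set (Vtx n)) : ∑ a : Fin n, (block1 W a).ncard = W.ncard := by
  classical
  have key : ∀ a : Fin n, (block1 W a).ncard =
      (W.toFinset.filter (fun w => w.1 = a)).card := by
    intro a
    rw [← Set.ncard_coe_finset]
    congr 1
    ext x
    simp [block1, Set.mem_toFinset]
  simp_rw [key]
  rw [← Finset.card_eq_sum_card_fiberwise (f := fun w : Vtx n => w.1)
    (t := Finset.univ) (fun x _ => Finset.mem_univ _)]
  rw [Set.ncard_eq_toFinset_card']

/-- The core per-colour structure theorem, stated for the first coordinate. -/
lemma core (hn : 3 ≤ n) (W : Set (Vtx n)) (hR : Res W) (hcard : W.ncard = 2 * n - 1) :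
    ∃ a : Fin n, (block1 W a).ncard = 1 ∧
      ∀ b : Fin n, b ≠ a → (block1 W b).ncard = 2 := by
  classical
  have hsum : ∑ a : Fin n, (block1 W a).ncard = 2 * n - 1 := by
    rw [sum_block1]; exact hcard
  set g : Fin n → ℕ := fun a => (block1 W a).ncard with hg
  -- basic extraction facts
  have empty_notmem : ∀ {a : Fin n}, block1 W a = ∅ → ∀ q r : Fin n,
      ((a, q, r) : Vtx n) ∉ W := by
    intro a hA q r hmem
    have : ((a, q, r) : Vtx n) ∈ block1 W a := ⟨hmem, rfl⟩
    rw [hA] at this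
    exact this
  have empty_vac : ∀ {a : Fin n}, block1 W a = ∅ → ∀ q r : Fin n,
      ∀ w ∈ W, w.1 = a → (w.2.1 = q ∨ w.2.2 = r) := by
    intro a hA q r w hw h1
    exfalso
    have : w ∈ block1 W a := ⟨hw, h1⟩
    rw [hA] at this
    exact this
  -- kill: an empty block together with a singleton block
  have kill01 : ∀ a a' : Fin n, a ≠ a' → g a = 0 → g a' = 1 → False := by
    intro a a' haa ha ha'
    have hA : block1 W a = ∅ := (Set.ncard_eq_zero (Set.toFinite _)).mp ha
    obtain ⟨v, hv⟩ := Set.ncard_eq_one.mp ha'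
    have hvW : v ∈ W ∧ v.1 = a' := by
      have : v ∈ block1 W a' := by rw [hv]; rfl
      exact this
    obtain ⟨c, hc, -⟩ := exists_ne_ne hn v.2.2 v.2.2
    refine master hR haa v.2.1 c (empty_notmem hA _ _) ?_ (empty_vac hA _ _) ?_
    · intro hmem
      have : ((a', v.2.1, c) : Vtx n) ∈ block1 W a' := ⟨hmem, rfl⟩
      rw [hv, Set.mem_singleton_iff] at this
      exact hc (congrArg (fun z : Vtx n => z.2.2) this)
    · intro w hw h1
      have : w ∈ block1 W a' := ⟨hw, h1⟩
      rw [hv, Set.mem_singleton_iff] at this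
      subst this
      exact Or.inl rfl
  -- kill: two singleton blocks
  have kill11 : ∀ a a' : Fin n, a ≠ a' → g a = 1 → g a' = 1 → False := by
    intro a a' haa ha ha'
    obtain ⟨u, hu⟩ := Set.ncard_eq_one.mp ha
    obtain ⟨v, hv⟩ := Set.ncard_eq_one.mp ha'
    have huW : u ∈ W ∧ u.1 = a := by
      have : u ∈ block1 W a := by rw [hu]; rfl
      exact this
    have hvW : v ∈ W ∧ v.1 = a' := by
      have : v ∈ block1 W a' := by rw [hv]; rfl
      exact this
    have memu : ∀ q r : Fin n, ((a, q, r) : Vtx n) ∈ W → ((a, q, r) : Vtx n) = u := by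
      intro q r hmem
      have : ((a, q, r) : Vtx n) ∈ block1 W a := ⟨hmem, rfl⟩
      rw [hu, Set.mem_singleton_iff] at this
      exact this
    have memv : ∀ q r : Fin n, ((a', q, r) : Vtx n) ∈ W → ((a', q, r) : Vtx n) = v := by
      intro q r hmem
      have : ((a', q, r) : Vtx n) ∈ block1 W a' := ⟨hmem, rfl⟩
      rw [hv, Set.mem_singleton_iff] at this
      exact this
    have blu : ∀ w ∈ W, w.1 = a → w = u := by
      intro w hw h1
      have : w ∈ block1 W a := ⟨hw, h1⟩
      rw [hu, Set.mem_singleton_iff] at this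
      exact this
    have blv : ∀ w ∈ W, w.1 = a' → w = v := by
      intro w hw h1
      have : w ∈ block1 W a' := ⟨hw, h1⟩
      rw [hv, Set.mem_singleton_iff] at this
      exact this
    by_cases h22 : u.2.1 = v.2.1
    · -- shared second coordinate; avoid both third coordinates
      obtain ⟨c, hcu, hcv⟩ := exists_ne_ne hn u.2.2 v.2.2
      refine master hR haa u.2.1 c ?_ ?_ ?_ ?_
      · intro hmem
        have := memu _ _ hmem
        exact hcu (congrArg (fun z : Vtx n => z.2.2) this)
      · intro hmem
        have := memv _ _ hmem
        exact hcv (congrArg (fun z : Vtx n => z.2.2) this)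
      · intro w hw h1; rw [blu w hw h1]; exact Or.inl rfl
      · intro w hw h1; rw [blv w hw h1]; exact Or.inl h22.symm
    · by_cases h33 : u.2.2 = v.2.2
      · obtain ⟨c, hcu, hcv⟩ := exists_ne_ne hn u.2.1 v.2.1
        refine master hR haa c u.2.2 ?_ ?_ ?_ ?_
        · intro hmem
          have := memu _ _ hmem
          exact hcu (congrArg (fun z : Vtx n => z.2.1) this)
        · intro hmem
          have := memv _ _ hmem
          exact hcv (congrArg (fun z : Vtx n => z.2.1) this)
        · intro w hw h1; rw [blu w hw h1]; exact Or.inr rfl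
        · intro w hw h1; rw [blv w hw h1]; exact Or.inr h33.symm
      · refine master hR haa u.2.1 v.2.2 ?_ ?_ ?_ ?_
        · intro hmem
          have := memu _ _ hmem
          exact h33 (congrArg (fun z : Vtx n => z.2.2) this).symm
        · intro hmem
          have h' := congrArg (fun z : Vtx n => z.2.1) (memv _ _ hmem)
          exact h22 h'
        · intro w hw h1; rw [blu w hw h1]; exact Or.inl rfl
        · intro w hw h1; rw [blv w hw h1]; exact Or.inr rfl
  -- kill: two empty blocks
  have kill00 : ∀ a a' : Fin n, a ≠ a' → g a = 0 → g a' = 0 → False := by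
    intro a a' haa ha ha'
    have hA : block1 W a = ∅ := (Set.ncard_eq_zero (Set.toFinite _)).mp ha
    have hA' : block1 W a' = ∅ := (Set.ncard_eq_zero (Set.toFinite _)).mp ha'
    have q0 : Fin n := ⟨0, by omega⟩
    exact master hR haa q0 q0 (empty_notmem hA _ _) (empty_notmem hA' _ _)
      (empty_vac hA _ _) (empty_vac hA' _ _)
  have kill : ∀ a a' : Fin n, a ≠ a' → g a ≤ 1 → g a' ≤ 1 → False := by
    intro a a' haa ha ha'
    interval_cases h : g a
    · interval_cases h' : g a'
      · exact kill00 a a' haa h h'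
      · exact kill01 a a' haa h h'
    · interval_cases h' : g a'
      · exact kill01 a' a haa.symm h' h
      · exact kill11 a a' haa h h'
  -- kill: an empty block together with a doubleton block
  have killD : ∀ a p : Fin n, g a = 0 → g p = 2 → False := by
    intro a p ha hp
    have hap : p ≠ a := by
      intro h
      rw [h] at hp
      omega
    have hA : block1 W a = ∅ := (Set.ncard_eq_zero (Set.toFinite _)).mp ha
    obtain ⟨u, v, huv, hB⟩ := Set.ncard_eq_two.mp hp
    have huW : u ∈ W ∧ u.1 = p := by
      have : u ∈ block1 W p := by rw [hB]; exact Set.mem_insert _ _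
      exact this
    have hvW : v ∈ W ∧ v.1 = p := by
      have : v ∈ block1 W p := by
        rw [hB]; exact Set.mem_insert_of_mem _ rfl
      exact this
    have memuv : ∀ q r : Fin n, ((p, q, r) : Vtx n) ∈ W →
        ((p, q, r) : Vtx n) = u ∨ ((p, q, r) : Vtx n) = v := by
      intro q r hmem
      have : ((p, q, r) : Vtx n) ∈ block1 W p := ⟨hmem, rfl⟩
      rw [hB] at this
      exact this
    have bluv : ∀ w ∈ W, w.1 = p → w = u ∨ w = v := by
      intro w hw h1
      have : w ∈ block1 W p := ⟨hw, h1⟩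
      rw [hB] at this
      exact this
    by_cases h22 : u.2.1 = v.2.1
    · have h33 : u.2.2 ≠ v.2.2 := by
        intro h
        exact huv (Prod.ext_iff.mpr ⟨huW.2.trans hvW.2.symm, Prod.ext_iff.mpr ⟨h22, h⟩⟩)
      obtain ⟨c, hcu, hcv⟩ := exists_ne_ne hn u.2.2 v.2.2
      refine master hR hap u.2.1 c ?_ (empty_notmem hA _ _) ?_ (empty_vac hA _ _)
      · intro hmem
        rcases memuv _ _ hmem with h | h
        · exact hcu (congrArg (fun z : Vtx n => z.2.2) h)
        · exact hcv (congrArg (fun z : Vtx n => z.2.2) h)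
      · intro w hw h1
        rcases bluv w hw h1 with h | h
        · rw [h]; exact Or.inl rfl
        · rw [h]; exact Or.inl h22.symm
    · by_cases h33 : u.2.2 = v.2.2
      · obtain ⟨c, hcu, hcv⟩ := exists_ne_ne hn u.2.1 v.2.1
        refine master hR hap c u.2.2 ?_ (empty_notmem hA _ _) ?_ (empty_vac hA _ _)
        · intro hmem
          rcases memuv _ _ hmem with h | h
          · exact hcu (congrArg (fun z : Vtx n => z.2.1) h)
          · exact hcv (congrArg (fun z : Vtx n => z.2.1) h)
        · intro w hw h1
          rcases bluv w hw h1 with h | h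
          · rw [h]; exact Or.inr rfl
          · rw [h]; exact Or.inr h33.symm
      · refine master hR hap u.2.1 v.2.2 ?_ (empty_notmem hA _ _) ?_ (empty_vac hA _ _)
        · intro hmem
          rcases memuv _ _ hmem with h | h
          · exact h33 (congrArg (fun z : Vtx n => z.2.2) h).symm
          · have h' := congrArg (fun z : Vtx n => z.2.1) h
            exact h22 h'
        · intro w hw h1
          rcases bluv w hw h1 with h | h
          · rw [h]; exact Or.inl rfl
          · rw [h]; exact Or.inr rfl
    -- pigeonhole: some block has size ≤ 1
  have hsmall : ∃ a : Fin n, g a ≤ 1 := by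
    by_contra h
    push_neg at h
    have h2 : ∀ a ∈ (Finset.univ : Finset (Fin n)), 2 ≤ g a := fun a _ => h a
    have := Finset.sum_le_sum h2
    rw [hsum, Finset.sum_const, Finset.card_univ, Fintype.card_fin, smul_eq_mul] at this
    omega
  obtain ⟨a₀, ha₀⟩ := hsmall
  have hothers : ∀ b : Fin n, b ≠ a₀ → 2 ≤ g b := by
    intro b hb
    by_contra h
    push_neg at h
    exact kill b a₀ hb (by omega) ha₀
  have hsplit : g a₀ + ∑ b ∈ Finset.univ.erase a₀, g b = 2 * n - 1 := by
    rw [Finset.add_sum_erase _ g (Finset.mem_univ a₀)]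
    exact hsum
  have hcarde : (Finset.univ.erase a₀).card = n - 1 := by
    rw [Finset.card_erase_of_mem (Finset.mem_univ _), Finset.card_univ, Fintype.card_fin]
  have ha1 : g a₀ = 1 := by
    rcases (Nat.le_one_iff_eq_zero_or_eq_one.mp ha₀) with h0 | h1
    · exfalso
      have hex : ∃ b : Fin n, b ≠ a₀ ∧ g b = 2 := by
        by_contra h
        push_neg at h
        have h3 : ∀ b ∈ Finset.univ.erase a₀, 3 ≤ g b := by
          intro b hb
          have hbne := Finset.ne_of_mem_erase hb
          have := hothers b hbne
          have := h b hbne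
          omega
        have hsl := Finset.sum_le_sum h3
        rw [Finset.sum_const, hcarde, smul_eq_mul] at hsl
        omega
      obtain ⟨b, hb, hb2⟩ := hex
      exact killD a₀ b h0 hb2
    · exact h1
  refine ⟨a₀, ha1, ?_⟩
  intro b hb
  have h2b := hothers b hb
  by_contra hne
  have hne2 : g b ≠ 2 := hne
  have h3 : 3 ≤ g b := by omega
  have hmemb : b ∈ Finset.univ.erase a₀ := Finset.mem_erase.mpr ⟨hb, Finset.mem_univ b⟩
  have hsplit2 : g b + ∑ c ∈ (Finset.univ.erase a₀).erase b, g c =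
      ∑ b ∈ Finset.univ.erase a₀, g b := Finset.add_sum_erase _ g hmemb
  have hlow : ∀ c ∈ (Finset.univ.erase a₀).erase b, 2 ≤ g c := fun c hc =>
    hothers c (Finset.ne_of_mem_erase (Finset.mem_of_mem_erase hc))
  have hsl := Finset.sum_le_sum hlow
  rw [Finset.sum_const, Finset.card_erase_of_mem hmemb, hcarde, smul_eq_mul] at hsl
  omega

/-! ### Transport along the cyclic coordinate permutation -/

/-- Cyclic shift of coordinates. -/
def cyc : Vtx n → Vtx n := fun x => (x.2.1, x.2.2, x.1)

lemma cyc_inj : Function.Injective (cyc (n := n)) := by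
  rintro ⟨a, b, c⟩ ⟨d, e, f⟩ h
  simp only [cyc, Prod.mk.injEq] at h
  simp [Prod.ext_iff, h.1, h.2.1, h.2.2]

lemma sh_cyc (x w : Vtx n) : sh (cyc x) (cyc w) ↔ sh x w := by
  simp only [cyc]
  tauto

lemma res_cyc {W : Set (Vtx n)} (hR : Res W) : Res (cyc '' W) := by
  rintro x y hx hy hxy
  obtain ⟨x₀, rfl⟩ : ∃ x₀, cyc x₀ = x := ⟨(x.2.2, x.1, x.2.1), rfl⟩
  obtain ⟨y₀, rfl⟩ : ∃ y₀, cyc y₀ = y := ⟨(y.2.2, y.1, y.2.1), rfl⟩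
  have hx₀ : x₀ ∉ W := fun h => hx ⟨x₀, h, rfl⟩
  have hy₀ : y₀ ∉ W := fun h => hy ⟨y₀, h, rfl⟩
  obtain ⟨w, hwW, hw⟩ := hR x₀ y₀ hx₀ hy₀ (fun h => hxy (by rw [h]))
  refine ⟨cyc w, ⟨w, hwW, rfl⟩, fun h => hw ?_⟩
  rw [sh_cyc, sh_cyc] at h
  exact h

lemma block1_cyc (W : Set (Vtx n)) (a : Fin n) :
    block1 (cyc '' W) a = cyc '' (block2 W a) := by
  ext x
  constructor
  · rintro ⟨⟨w, hwW, rfl⟩, h1⟩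
    exact ⟨w, ⟨hwW, h1⟩, rfl⟩
  · rintro ⟨w, ⟨hwW, h⟩, rfl⟩
    exact ⟨⟨w, hwW, rfl⟩, h⟩

lemma block2_cyc (W : Set (Vtx n)) (a : Fin n) :
    block2 (cyc '' W) a = cyc '' (block3 W a) := by
  ext x
  constructor
  · rintro ⟨⟨w, hwW, rfl⟩, h1⟩
    exact ⟨w, ⟨hwW, h1⟩, rfl⟩
  · rintro ⟨w, ⟨hwW, h⟩, rfl⟩
    exact ⟨⟨w, hwW, rfl⟩, h⟩

end Aux

theorem stmt4 (n : ℕ) (hn : 3 ≤ n) (W : Set (Fin n × Fin n × Fin n))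
    (hW : IsResolving W) (hcard : W.ncard = 2 * n - 1) :
    (∃ a : Fin n, (block1 W a).ncard = 1 ∧ ∀ b : Fin n, b ≠ a → (block1 W b).ncard = 2) ∧
    (∃ a : Fin n, (block2 W a).ncard = 1 ∧ ∀ b : Fin n, b ≠ a → (block2 W b).ncard = 2) ∧
    (∃ a : Fin n, (block3 W a).ncard = 1 ∧ ∀ b : Fin n, b ≠ a → (block3 W b).ncard = 2) := by
  have hR : Res W := isResolving_res hn W hW
  have hR2 : Res (cyc '' W) := res_cyc hR
  have hR3 : Res (cyc '' (cyc '' W)) := res_cyc hR2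
  have hcard2 : (cyc '' W).ncard = 2 * n - 1 := by
    rw [Set.ncard_image_of_injective _ cyc_inj]; exact hcard
  have hcard3 : (cyc '' (cyc '' W)).ncard = 2 * n - 1 := by
    rw [Set.ncard_image_of_injective _ cyc_inj]; exact hcard2
  refine ⟨core hn W hR hcard, ?_, ?_⟩
  · obtain ⟨a, h1, h2⟩ := core hn _ hR2 hcard2
    rw [block1_cyc, Set.ncard_image_of_injective _ cyc_inj] at h1
    refine ⟨a, h1, fun b hb => ?_⟩
    have := h2 b hb
    rw [block1_cyc, Set.ncard_image_of_injective _ cyc_inj] at this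
    exact this
  · obtain ⟨a, h1, h2⟩ := core hn _ hR3 hcard3
    rw [block1_cyc, block2_cyc, Set.ncard_image_of_injective _ cyc_inj,
      Set.ncard_image_of_injective _ cyc_inj] at h1
    refine ⟨a, h1, fun b hb => ?_⟩
    have := h2 b hb
    rw [block1_cyc, block2_cyc, Set.ncard_image_of_injective _ cyc_inj,
      Set.ncard_image_of_injective _ cyc_inj] at this
    exact this
end

section
/- Let n₁,n₂,n₃ ≥ 3 and let W be a subset of vertices of HG(n₁,n₂,n₃;3). Suppose there exist a₁ ≠ b₁ in [n₁], a₂ ≠ b₂ in [n₂], a₃ ≠ b₃ in [n₃] and landmarks w₁,…,w₆ such that W_{1,a₁} = {w₁,w₂}, W_{1,b₁} = {w₄,w₅}, W_{2,a₂} = {w₅,w₆}, W_{2,b₂} = {w₂,w₃}, W_{3,a₃} = {w₃,w₄}, and W_{3,b₃} = {w₁,w₆} (a forbidden 6-cycle with opposite edges of the same color). Then the vertices (a₁,a₂,a₃) and (b₁,b₂,b₃) are not in W and are unresolved by W, so W is not a resolving set. -/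
lemma exists_third {n : ℕ} (h : 3 ≤ n) (u v : Fin n) : ∃ c : Fin n, c ≠ u ∧ c ≠ v := by
  by_contra hc
  push_neg at hc
  have hsub : (Finset.univ : Finset (Fin n)) ⊆ {u, v} := by
    intro c _
    rcases eq_or_ne c u with h' | h'
    · simp [h']
    · simp [hc c h']
  have := Finset.card_le_card hsub
  have hcard : ({u, v} : Finset (Fin n)).card ≤ 2 := Finset.card_insert_le _ _ |>.trans (by simp)
  simp [Finset.card_univ] at this
  omega

lemma dist_eq_two {n₁ n₂ n₃ : ℕ} (h₁ : 3 ≤ n₁) (h₂ : 3 ≤ n₂) (h₃ : 3 ≤ n₃)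
    (x y : Fin n₁ × Fin n₂ × Fin n₃) (hne : x ≠ y) (hadj : ¬ (HG n₁ n₂ n₃).Adj x y) :
    (HG n₁ n₂ n₃).dist x y = 2 := by
  obtain ⟨c₁, hc₁x, hc₁y⟩ := exists_third h₁ x.1 y.1
  obtain ⟨c₂, hc₂x, hc₂y⟩ := exists_third h₂ x.2.1 y.2.1
  obtain ⟨c₃, hc₃x, hc₃y⟩ := exists_third h₃ x.2.2 y.2.2
  have hxz : (HG n₁ n₂ n₃).Adj x (c₁, c₂, c₃) := ⟨hc₁x.symm, hc₂x.symm, hc₃x.symm⟩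
  have hzy : (HG n₁ n₂ n₃).Adj (c₁, c₂, c₃) y := ⟨hc₁y, hc₂y, hc₃y⟩
  have hle : (HG n₁ n₂ n₃).dist x y ≤ 2 := by
    have := SimpleGraph.dist_le (SimpleGraph.Walk.cons hxz (SimpleGraph.Walk.cons hzy SimpleGraph.Walk.nil))
    simpa using this
  have hne0 : (HG n₁ n₂ n₃).dist x y ≠ 0 := by
    intro h0
    rcases SimpleGraph.dist_eq_zero_iff_eq_or_not_reachable.mp h0 with h | h
    · exact hne h
    · exact h ⟨(SimpleGraph.Walk.cons hxz (SimpleGraph.Walk.cons hzy SimpleGraph.Walk.nil))⟩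
  have hne1 : (HG n₁ n₂ n₃).dist x y ≠ 1 := fun h1 =>
    hadj (SimpleGraph.dist_eq_one_iff_adj.mp h1)
  omega

theorem stmt6 (n₁ n₂ n₃ : ℕ) (h₁ : 3 ≤ n₁) (h₂ : 3 ≤ n₂) (h₃ : 3 ≤ n₃)
    (W : Set (Fin n₁ × Fin n₂ × Fin n₃))
    (a₁ b₁ : Fin n₁) (hab₁ : a₁ ≠ b₁) (a₂ b₂ : Fin n₂) (hab₂ : a₂ ≠ b₂)
    (a₃ b₃ : Fin n₃) (hab₃ : a₃ ≠ b₃)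
    (w₁ w₂ w₃ w₄ w₅ w₆ : Fin n₁ × Fin n₂ × Fin n₃)
    (hdist : List.Pairwise (· ≠ ·) [w₁, w₂, w₃, w₄, w₅, w₆])
    (hB₁ : block1 W a₁ = {w₁, w₂}) (hB₂ : block1 W b₁ = {w₄, w₅})
    (hB₃ : block2 W a₂ = {w₅, w₆}) (hB₄ : block2 W b₂ = {w₂, w₃})
    (hB₅ : block3 W a₃ = {w₃, w₄}) (hB₆ : block3 W b₃ = {w₁, w₆}) :
    (a₁, a₂, a₃) ∉ W ∧ (b₁, b₂, b₃) ∉ W ∧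
    (∀ w ∈ W, (HG n₁ n₂ n₃).dist (a₁, a₂, a₃) w = (HG n₁ n₂ n₃).dist (b₁, b₂, b₃) w) ∧
    ¬ IsResolving W := by
  simp only [List.pairwise_cons, List.mem_cons, List.not_mem_nil, List.mem_singleton] at hdist
  -- facts about the wᵢ
  have hw₁ : w₁ ∈ W ∧ w₁.1 = a₁ := by
    have : w₁ ∈ block1 W a₁ := by rw [hB₁]; left; rfl
    exact this
  have hw₂ : w₂ ∈ W ∧ w₂.1 = a₁ := by
    have : w₂ ∈ block1 W a₁ := by rw [hB₁]; right; rfl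
    exact this
  have hw₄ : w₄ ∈ W ∧ w₄.1 = b₁ := by
    have : w₄ ∈ block1 W b₁ := by rw [hB₂]; left; rfl
    exact this
  have hw₅ : w₅ ∈ W ∧ w₅.1 = b₁ := by
    have : w₅ ∈ block1 W b₁ := by rw [hB₂]; right; rfl
    exact this
  have hw₅' : w₅.2.1 = a₂ := by
    have : w₅ ∈ block2 W a₂ := by rw [hB₃]; left; rfl
    exact this.2
  have hw₆ : w₆ ∈ W ∧ w₆.2.1 = a₂ := by
    have : w₆ ∈ block2 W a₂ := by rw [hB₃]; right; rfl
    exact this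
  have hw₂' : w₂.2.1 = b₂ := by
    have : w₂ ∈ block2 W b₂ := by rw [hB₄]; left; rfl
    exact this.2
  have hw₃ : w₃ ∈ W ∧ w₃.2.1 = b₂ := by
    have : w₃ ∈ block2 W b₂ := by rw [hB₄]; right; rfl
    exact this
  have hw₃' : w₃.2.2 = a₃ := by
    have : w₃ ∈ block3 W a₃ := by rw [hB₅]; left; rfl
    exact this.2
  have hw₄' : w₄.2.2 = a₃ := by
    have : w₄ ∈ block3 W a₃ := by rw [hB₅]; right; rfl
    exact this.2
  have hw₁' : w₁.2.2 = b₃ := by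
    have : w₁ ∈ block3 W b₃ := by rw [hB₆]; left; rfl
    exact this.2
  have hw₆' : w₆.2.2 = b₃ := by
    have : w₆ ∈ block3 W b₃ := by rw [hB₆]; right; rfl
    exact this.2
  set x : Fin n₁ × Fin n₂ × Fin n₃ := (a₁, a₂, a₃) with hx
  set y : Fin n₁ × Fin n₂ × Fin n₃ := (b₁, b₂, b₃) with hy
  have hxW : x ∉ W := by
    intro hxw
    have h1 : x ∈ block1 W a₁ := ⟨hxw, rfl⟩
    have h2 : x ∈ block2 W a₂ := ⟨hxw, rfl⟩
    rw [hB₁] at h1; rw [hB₃] at h2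
    simp only [Set.mem_insert_iff, Set.mem_singleton_iff] at h1 h2
    rcases h1 with h1 | h1 <;> rcases h2 with h2 | h2 <;> subst h1 <;> tauto
  have hyW : y ∉ W := by
    intro hyw
    have h1 : y ∈ block1 W b₁ := ⟨hyw, rfl⟩
    have h2 : y ∈ block2 W b₂ := ⟨hyw, rfl⟩
    rw [hB₂] at h1; rw [hB₄] at h2
    simp only [Set.mem_insert_iff, Set.mem_singleton_iff] at h1 h2
    rcases h1 with h1 | h1 <;> rcases h2 with h2 | h2 <;> subst h1 <;> tauto
  have hxy : x ≠ y := by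
    intro h
    apply hab₁
    exact congrArg Prod.fst h
  have key : ∀ w ∈ W, (HG n₁ n₂ n₃).dist x w = (HG n₁ n₂ n₃).dist y w := by
    intro w hw
    -- adjacency to x iff adjacency to y, for w ∈ W
    have hadj_iff : (HG n₁ n₂ n₃).Adj x w ↔ (HG n₁ n₂ n₃).Adj y w := by
      constructor
      · rintro ⟨hA1, hA2, hA3⟩
        by_contra hny
        have hor : w.1 = b₁ ∨ w.2.1 = b₂ ∨ w.2.2 = b₃ := by
          by_contra hc
          push_neg at hc
          exact hny ⟨fun h => hc.1 h.symm, fun h => hc.2.1 h.symm, fun h => hc.2.2 h.symm⟩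
        rcases hor with h | h | h
        · have : w ∈ block1 W b₁ := ⟨hw, h⟩
          rw [hB₂] at this
          simp only [Set.mem_insert_iff, Set.mem_singleton_iff] at this
          rcases this with h' | h' <;> subst h'
          · exact hA3 hw₄'.symm
          · exact hA2 hw₅'.symm
        · have : w ∈ block2 W b₂ := ⟨hw, h⟩
          rw [hB₄] at this
          simp only [Set.mem_insert_iff, Set.mem_singleton_iff] at this
          rcases this with h' | h' <;> subst h'
          · exact hA1 hw₂.2.symm
          · exact hA3 hw₃'.symm
        · have : w ∈ block3 W b₃ := ⟨hw, h⟩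
          rw [hB₆] at this
          simp only [Set.mem_insert_iff, Set.mem_singleton_iff] at this
          rcases this with h' | h' <;> subst h'
          · exact hA1 hw₁.2.symm
          · exact hA2 hw₆.2.symm
      · rintro ⟨hA1, hA2, hA3⟩
        by_contra hnx
        have hor : w.1 = a₁ ∨ w.2.1 = a₂ ∨ w.2.2 = a₃ := by
          by_contra hc
          push_neg at hc
          exact hnx ⟨fun h => hc.1 h.symm, fun h => hc.2.1 h.symm, fun h => hc.2.2 h.symm⟩
        rcases hor with h | h | h
        · have : w ∈ block1 W a₁ := ⟨hw, h⟩
          rw [hB₁] at this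
          simp only [Set.mem_insert_iff, Set.mem_singleton_iff] at this
          rcases this with h' | h' <;> subst h'
          · exact hA3 hw₁'.symm
          · exact hA2 hw₂'.symm
        · have : w ∈ block2 W a₂ := ⟨hw, h⟩
          rw [hB₃] at this
          simp only [Set.mem_insert_iff, Set.mem_singleton_iff] at this
          rcases this with h' | h' <;> subst h'
          · exact hA1 hw₅.2.symm
          · exact hA3 hw₆'.symm
        · have : w ∈ block3 W a₃ := ⟨hw, h⟩
          rw [hB₅] at this
          simp only [Set.mem_insert_iff, Set.mem_singleton_iff] at this
          rcases this with h' | h' <;> subst h'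
          · exact hA2 hw₃.2.symm
          · exact hA1 hw₄.2.symm
    by_cases hax : (HG n₁ n₂ n₃).Adj x w
    · rw [SimpleGraph.dist_eq_one_iff_adj.mpr hax,
        SimpleGraph.dist_eq_one_iff_adj.mpr (hadj_iff.mp hax)]
    · have hay := (not_iff_not.mpr hadj_iff).mp hax
      have hwx : x ≠ w := fun h => hxW (h ▸ hw)
      have hwy : y ≠ w := fun h => hyW (h ▸ hw)
      rw [dist_eq_two h₁ h₂ h₃ x w hwx hax, dist_eq_two h₁ h₂ h₃ y w hwy hay]
  refine ⟨hxW, hyW, key, ?_⟩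
  intro hres
  obtain ⟨w, hw, hne⟩ := hres x y hxW hyW hxy
  exact hne (key w hw)
end

section
/- Let n₁,n₂,n₃ ≥ 3 and let W be a subset of vertices of HG(n₁,n₂,n₃;3). Suppose there exist a₁ ∈ [n₁], a₂ ∈ [n₂], a₃ ∈ [n₃] and landmarks w₁,w₂,w₃ such that W_{1,a₁} = {w₁,w₂}, W_{2,a₂} = {w₂,w₃}, and W_{3,a₃} = {w₃,w₁} (a rainbow triangle). Let u = (n₁+1, n₂+1, n₃+1). Then in the larger Hamming graph HG(n₁+1,n₂+1,n₃+1;3), the set W ∪ {u} is not a resolving set: the vertices (a₁, a₂, n₃+1) and (a₁, n₂+1, a₃) are unresolved. -/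
lemma exists_third_s7 {m : ℕ} (h : 3 ≤ m) (a b : Fin m) : ∃ c : Fin m, c ≠ a ∧ c ≠ b := by
  by_contra hc
  push_neg at hc
  have hsub : (Finset.univ : Finset (Fin m)) ⊆ {a, b} := by
    intro c _
    rcases or_iff_not_imp_left.mpr (hc c) with h | h <;> simp [h]
  have hcard := Finset.card_le_card hsub
  have h2 : ({a, b} : Finset (Fin m)).card ≤ 2 :=
    (Finset.card_insert_le _ _).trans (by simp)
  simp [Finset.card_univ] at hcard
  omega

lemma HG_dist_two {m₁ m₂ m₃ : ℕ} (h1 : 3 ≤ m₁) (h2 : 3 ≤ m₂) (h3 : 3 ≤ m₃)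
    (x y : Fin m₁ × Fin m₂ × Fin m₃) (hne : x ≠ y) (hnadj : ¬ (HG m₁ m₂ m₃).Adj x y) :
    (HG m₁ m₂ m₃).dist x y = 2 := by
  obtain ⟨c₁, hc₁⟩ := exists_third_s7 h1 x.1 y.1
  obtain ⟨c₂, hc₂⟩ := exists_third_s7 h2 x.2.1 y.2.1
  obtain ⟨c₃, hc₃⟩ := exists_third_s7 h3 x.2.2 y.2.2
  set z : Fin m₁ × Fin m₂ × Fin m₃ := (c₁, c₂, c₃)
  have hxz : (HG m₁ m₂ m₃).Adj x z := ⟨hc₁.1.symm, hc₂.1.symm, hc₃.1.symm⟩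
  have hzy : (HG m₁ m₂ m₃).Adj z y := ⟨hc₁.2, hc₂.2, hc₃.2⟩
  have hle : (HG m₁ m₂ m₃).dist x y ≤ 2 := by
    have := SimpleGraph.dist_le
      (SimpleGraph.Walk.cons hxz (SimpleGraph.Walk.cons hzy SimpleGraph.Walk.nil))
    simpa using this
  have hr : (HG m₁ m₂ m₃).Reachable x y := ⟨SimpleGraph.Walk.cons hxz
    (SimpleGraph.Walk.cons hzy SimpleGraph.Walk.nil)⟩
  have h0 : (HG m₁ m₂ m₃).dist x y ≠ 0 := by
    intro h
    rcases SimpleGraph.dist_eq_zero_iff_eq_or_not_reachable.mp h with h' | h'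
    · exact hne h'
    · exact h' hr
  have h1' : (HG m₁ m₂ m₃).dist x y ≠ 1 := by
    intro h
    exact hnadj (SimpleGraph.dist_eq_one_iff_adj.mp h)
  omega

lemma HG_dist_one {m₁ m₂ m₃ : ℕ} {x y : Fin m₁ × Fin m₂ × Fin m₃}
    (h : (HG m₁ m₂ m₃).Adj x y) : (HG m₁ m₂ m₃).dist x y = 1 :=
  SimpleGraph.dist_eq_one_iff_adj.mpr h

theorem stmt7 (n₁ n₂ n₃ : ℕ) (h₁ : 3 ≤ n₁) (h₂ : 3 ≤ n₂) (h₃ : 3 ≤ n₃)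
    (W : Set (Fin n₁ × Fin n₂ × Fin n₃))
    (a₁ : Fin n₁) (a₂ : Fin n₂) (a₃ : Fin n₃)
    (w₁ w₂ w₃ : Fin n₁ × Fin n₂ × Fin n₃)
    (hdist : List.Pairwise (· ≠ ·) [w₁, w₂, w₃])
    (hB₁ : block1 W a₁ = {w₁, w₂}) (hB₂ : block2 W a₂ = {w₂, w₃})
    (hB₃ : block3 W a₃ = {w₃, w₁}) :
    -- pass to the larger Hamming graph `HG(n₁+1,n₂+1,n₃+1;3)` via the natural inclusion
    ∀ W' : Set (Fin (n₁+1) × Fin (n₂+1) × Fin (n₃+1)),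
      W' = (fun w : Fin n₁ × Fin n₂ × Fin n₃ =>
              (w.1.castSucc, w.2.1.castSucc, w.2.2.castSucc)) '' W
            ∪ {(Fin.last n₁, Fin.last n₂, Fin.last n₃)} →
      (a₁.castSucc, a₂.castSucc, Fin.last n₃) ∉ W' ∧
      (a₁.castSucc, Fin.last n₂, a₃.castSucc) ∉ W' ∧
      (∀ w ∈ W',
        (HG (n₁+1) (n₂+1) (n₃+1)).dist (a₁.castSucc, a₂.castSucc, Fin.last n₃) w =
        (HG (n₁+1) (n₂+1) (n₃+1)).dist (a₁.castSucc, Fin.last n₂, a₃.castSucc) w) ∧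
      ¬ IsResolving W' := by
  intro W' hW'
  have hm₁ : 3 ≤ n₁ + 1 := by omega
  have hm₂ : 3 ≤ n₂ + 1 := by omega
  have hm₃ : 3 ≤ n₃ + 1 := by omega
  set x : Fin (n₁+1) × Fin (n₂+1) × Fin (n₃+1) := (a₁.castSucc, a₂.castSucc, Fin.last n₃)
  set y : Fin (n₁+1) × Fin (n₂+1) × Fin (n₃+1) := (a₁.castSucc, Fin.last n₂, a₃.castSucc)
  -- key block facts
  have hw₂1 : w₂.1 = a₁ := by
    have : w₂ ∈ block1 W a₁ := by rw [hB₁]; right; rfl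
    exact this.2
  have hw₁1 : w₁.1 = a₁ := by
    have : w₁ ∈ block1 W a₁ := by rw [hB₁]; left; rfl
    exact this.2
  have hw₃2 : w₃.2.1 = a₂ := by
    have : w₃ ∈ block2 W a₂ := by rw [hB₂]; right; rfl
    exact this.2
  have hw₃3 : w₃.2.2 = a₃ := by
    have : w₃ ∈ block3 W a₃ := by rw [hB₃]; left; rfl
    exact this.2
  have key : ∀ v ∈ W, v.1 ≠ a₁ → (v.2.1 = a₂ ↔ v.2.2 = a₃) := by
    intro v hv hv1
    constructor
    · intro hv2
      have hmem : v ∈ block2 W a₂ := ⟨hv, hv2⟩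
      rw [hB₂] at hmem
      rcases hmem with h | h
      · exact absurd (h ▸ hw₂1) hv1
      · exact h ▸ hw₃3
    · intro hv3
      have hmem : v ∈ block3 W a₃ := ⟨hv, hv3⟩
      rw [hB₃] at hmem
      rcases hmem with h | h
      · exact h ▸ hw₃2
      · exact absurd (h ▸ hw₁1) hv1
  have hxW' : x ∉ W' := by
    rw [hW']
    rintro (⟨v, _, hv⟩ | hu)
    · have := congrArg (fun p => p.2.2) hv
      simp only at this
      exact absurd this (Fin.castSucc_lt_last v.2.2).ne
    · have := congrArg (fun p => p.1) hu
      simp only [Set.mem_singleton_iff] at hu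
      have : x.1 = Fin.last n₁ := by rw [hu]
      exact absurd this (Fin.castSucc_lt_last a₁).ne
  have hyW' : y ∉ W' := by
    rw [hW']
    rintro (⟨v, _, hv⟩ | hu)
    · have := congrArg (fun p => p.2.1) hv
      simp only at this
      exact absurd this (Fin.castSucc_lt_last v.2.1).ne
    · simp only [Set.mem_singleton_iff] at hu
      have : y.1 = Fin.last n₁ := by rw [hu]
      exact absurd this (Fin.castSucc_lt_last a₁).ne
  have hxy : x ≠ y := by
    intro h
    have : x.2.1 = y.2.1 := by rw [h]
    exact (Fin.castSucc_lt_last a₂).ne this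
  have hsame : ∀ w ∈ W',
      (HG (n₁+1) (n₂+1) (n₃+1)).dist x w = (HG (n₁+1) (n₂+1) (n₃+1)).dist y w := by
    intro w hw
    rw [hW'] at hw
    rcases hw with ⟨v, hvW, rfl⟩ | hu
    · set w : Fin (n₁+1) × Fin (n₂+1) × Fin (n₃+1) :=
        (v.1.castSucc, v.2.1.castSucc, v.2.2.castSucc) with hwdef
      by_cases hv1 : v.1 = a₁
      · have hxne : x ≠ w := fun h => (Fin.castSucc_lt_last v.2.2).ne.symm
          (congrArg (fun p => p.2.2) h)
        have hyne : y ≠ w := fun h => (Fin.castSucc_lt_last v.2.1).ne.symm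
          (congrArg (fun p => p.2.1) h)
        have hxna : ¬ (HG (n₁+1) (n₂+1) (n₃+1)).Adj x w := fun h =>
          h.1 (by simp [x, w, hv1])
        have hyna : ¬ (HG (n₁+1) (n₂+1) (n₃+1)).Adj y w := fun h =>
          h.1 (by simp [y, w, hv1])
        rw [HG_dist_two hm₁ hm₂ hm₃ x w hxne hxna, HG_dist_two hm₁ hm₂ hm₃ y w hyne hyna]
      · by_cases hv2 : v.2.1 = a₂
        · have hv3 : v.2.2 = a₃ := (key v hvW hv1).mp hv2
          have hxne : x ≠ w := fun h => (Fin.castSucc_lt_last v.2.2).ne.symm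
            (congrArg (fun p => p.2.2) h)
          have hyne : y ≠ w := fun h => (Fin.castSucc_lt_last v.2.1).ne.symm
            (congrArg (fun p => p.2.1) h)
          have hxna : ¬ (HG (n₁+1) (n₂+1) (n₃+1)).Adj x w := fun h =>
            h.2.1 (by simp [x, w, hv2])
          have hyna : ¬ (HG (n₁+1) (n₂+1) (n₃+1)).Adj y w := fun h =>
            h.2.2 (by simp [y, w, hv3])
          rw [HG_dist_two hm₁ hm₂ hm₃ x w hxne hxna, HG_dist_two hm₁ hm₂ hm₃ y w hyne hyna]
        · have hv3 : v.2.2 ≠ a₃ := fun h => hv2 ((key v hvW hv1).mpr h)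
          have hxa : (HG (n₁+1) (n₂+1) (n₃+1)).Adj x w := by
            refine ⟨?_, ?_, ?_⟩
            · exact fun h => hv1 (Fin.castSucc_injective _ h).symm
            · exact fun h => hv2 (Fin.castSucc_injective _ h).symm
            · exact (Fin.castSucc_lt_last v.2.2).ne.symm
          have hya : (HG (n₁+1) (n₂+1) (n₃+1)).Adj y w := by
            refine ⟨?_, ?_, ?_⟩
            · exact fun h => hv1 (Fin.castSucc_injective _ h).symm
            · exact (Fin.castSucc_lt_last v.2.1).ne.symm
            · exact fun h => hv3 (Fin.castSucc_injective _ h).symm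
          rw [HG_dist_one hxa, HG_dist_one hya]
    · simp only [Set.mem_singleton_iff] at hu
      subst hu
      have hxne : x ≠ (Fin.last n₁, Fin.last n₂, Fin.last n₃) := fun h =>
        (Fin.castSucc_lt_last a₁).ne (congrArg (fun p => p.1) h)
      have hyne : y ≠ (Fin.last n₁, Fin.last n₂, Fin.last n₃) := fun h =>
        (Fin.castSucc_lt_last a₁).ne (congrArg (fun p => p.1) h)
      have hxna : ¬ (HG (n₁+1) (n₂+1) (n₃+1)).Adj x (Fin.last n₁, Fin.last n₂, Fin.last n₃) :=
        fun h => h.2.2 rfl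
      have hyna : ¬ (HG (n₁+1) (n₂+1) (n₃+1)).Adj y (Fin.last n₁, Fin.last n₂, Fin.last n₃) :=
        fun h => h.2.1 rfl
      rw [HG_dist_two hm₁ hm₂ hm₃ _ _ hxne hxna, HG_dist_two hm₁ hm₂ hm₃ _ _ hyne hyna]
  refine ⟨hxW', hyW', hsame, ?_⟩
  intro hres
  obtain ⟨w, hw, hne⟩ := hres x y hxW' hyW' hxy
  exact hne (hsame w hw)
end
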